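/- Let α ∈ [0,1) and let v_A be any Alice density with δ ≤ v_A ≤ Δ and ∫_0^1 v_A = 1. Then there exist a Bob value density ṽ_B (bounded above and below by positive constants, with ∫_0^1 ṽ_B = 1), constants c, C > 0, a threshold T_0, and for each horizon T a pure Bob strategy S̃_B, such that for all T ≥ T_0: (i) on every T-round trajectory consistent with S̃_B, Bob's regret is at most C·T^α; and (ii) for every pure Alice strategy S_A, Alice's Stackelberg regret on the trajectory consistent with (S_A, S̃_B) is at least c·T^{(α+1)/2}. -/

import Mathlib

open MeasureTheory

/-- Bob's choice of the left or right piece. -/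
inductive Choice
  | L
  | R
deriving DecidableEq

instance : Fintype Choice :=
  ⟨{Choice.L, Choice.R}, fun x => by cases x <;> simp⟩

/-- The cumulative valuation `V(x) = ∫_0^x v`. -/
noncomputable def cumul (v : ℝ → ℝ) (x : ℝ) : ℝ := ∫ y in (0:ℝ)..x, v y

/-- `v` is an integrable value density on `[0,1]`, bounded between `lo` and `hi`,
integrating to `1`. -/
def IsDensity (lo hi : ℝ) (v : ℝ → ℝ) : Prop :=
  IntervalIntegrable v volume 0 1 ∧
  (∀ x ∈ Set.Icc (0:ℝ) 1, lo ≤ v x ∧ v x ≤ hi) ∧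
  (∫ y in (0:ℝ)..1, v y) = 1

/-- Alice's round-`t` utility: if Bob picks `L` she gets `[a_t,1]`, else `[0,a_t]`. -/
noncomputable def uA (vA : ℝ → ℝ) (a : ℕ → ℝ) (b : ℕ → Choice) (t : ℕ) : ℝ :=
  if b t = Choice.L then 1 - cumul vA (a t) else cumul vA (a t)

/-- Bob's round-`t` utility: if he picks `L` he gets `[0,a_t]`, else `[a_t,1]`. -/
noncomputable def uB (vB : ℝ → ℝ) (a : ℕ → ℝ) (b : ℕ → Choice) (t : ℕ) : ℝ :=
  if b t = Choice.L then cumul vB (a t) else 1 - cumul vB (a t)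

/-- A pure Alice strategy: given the history `(a_1,…,a_t; b_1,…,b_t)`, produce the
next cut `a_{t+1}`. -/
def AliceStrategy : Type := ∀ t : ℕ, (Fin t → ℝ) → (Fin t → Choice) → ℝ

/-- A pure (sequential) Bob strategy: given `(a_1,…,a_{t+1}; b_1,…,b_t)`, produce the
next choice `b_{t+1}`. -/
def BobStrategy : Type := ∀ t : ℕ, (Fin (t+1) → ℝ) → (Fin t → Choice) → Choice

/-- The trajectory `(a,b)` is consistent with Alice's strategy `S` over horizon `T`. -/
def AliceConsistent (S : AliceStrategy) (a : ℕ → ℝ) (b : ℕ → Choice) (T : ℕ) : Prop :=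
  ∀ t : ℕ, t < T → a (t+1) = S t (fun i => a (i.1+1)) (fun i => b (i.1+1))

/-- The trajectory `(a,b)` is consistent with Bob's strategy `S` over horizon `T`. -/
def BobConsistent (S : BobStrategy) (a : ℕ → ℝ) (b : ℕ → Choice) (T : ℕ) : Prop :=
  ∀ t : ℕ, t < T → b (t+1) = S t (fun i => a (i.1+1)) (fun i => b (i.1+1))

/-- Alice's Stackelberg value `u_A^* = max(V_A(m_B), 1 - V_A(m_B))`. -/
noncomputable def stackValue (vA : ℝ → ℝ) (mB : ℝ) : ℝ :=
  max (cumul vA mB) (1 - cumul vA mB)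

/-- Bob's regret over horizon `T` on trajectory `(a,b)`. -/
noncomputable def bobRegret (vB : ℝ → ℝ) (a : ℕ → ℝ) (b : ℕ → Choice) (T : ℕ) : ℝ :=
  ∑ t ∈ Finset.Icc 1 T, (max (cumul vB (a t)) (1 - cumul vB (a t)) - uB vB a b t)

/-- Alice's Stackelberg regret over horizon `T` on trajectory `(a,b)`. -/
noncomputable def aliceRegret (vA : ℝ → ℝ) (mB : ℝ) (a : ℕ → ℝ) (b : ℕ → Choice)
    (T : ℕ) : ℝ :=
  ∑ t ∈ Finset.Icc 1 T, (stackValue vA mB - uA vA a b t)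

section CakeAux

lemma sum_Icc_one_eq_range (f : ℕ → ℝ) (T : ℕ) :
    ∑ t ∈ Finset.Icc 1 T, f t = ∑ i ∈ Finset.range T, f (i + 1) := by
  induction T with
  | zero => simp
  | succ T ih => rw [Finset.sum_Icc_succ_top (by omega), ih, Finset.sum_range_succ]

lemma subInt (v : ℝ → ℝ) (hv : IntervalIntegrable v volume 0 1)
    {x y : ℝ} (hx : 0 ≤ x) (hy : y ≤ 1) (h : x ≤ y) :
    IntervalIntegrable v volume x y := by
  apply hv.mono_set
  rw [Set.uIcc_of_le h, Set.uIcc_of_le (by norm_num : (0:ℝ) ≤ 1)]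
  exact Set.Icc_subset_Icc hx hy

lemma cumul_sub (v : ℝ → ℝ) (hv : IntervalIntegrable v volume 0 1)
    {x y : ℝ} (hx : 0 ≤ x) (hy : y ≤ 1) (h : x ≤ y) :
    cumul v y - cumul v x = ∫ t in x..y, v t := by
  have h0y : 0 ≤ y := le_trans hx h
  have hx1 : x ≤ 1 := le_trans h hy
  exact intervalIntegral.integral_interval_sub_left
    (subInt v hv le_rfl hy h0y) (subInt v hv le_rfl hx1 hx)

lemma cumul_bounds {v : ℝ → ℝ} {lo hi : ℝ} (hv : IsDensity lo hi v)
    {x y : ℝ} (hx : 0 ≤ x) (hy : y ≤ 1) (h : x ≤ y) :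
    lo * (y - x) ≤ cumul v y - cumul v x ∧ cumul v y - cumul v x ≤ hi * (y - x) := by
  obtain ⟨hint, hbd, -⟩ := hv
  rw [cumul_sub v hint hx hy h]
  have hsub : IntervalIntegrable v volume x y := subInt v hint hx hy h
  constructor
  · calc lo * (y - x) = ∫ _t in x..y, lo := by
          rw [intervalIntegral.integral_const, smul_eq_mul]; ring
      _ ≤ ∫ t in x..y, v t := by
          apply intervalIntegral.integral_mono_on h intervalIntegrable_const hsub
          intro t ht
          exact (hbd t ⟨le_trans hx ht.1, le_trans ht.2 hy⟩).1
  · calc (∫ t in x..y, v t) ≤ ∫ _t in x..y, hi := by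
          apply intervalIntegral.integral_mono_on h hsub intervalIntegrable_const
          intro t ht
          exact (hbd t ⟨le_trans hx ht.1, le_trans ht.2 hy⟩).2
      _ = hi * (y - x) := by rw [intervalIntegral.integral_const, smul_eq_mul]; ring

lemma cumul_zero (v : ℝ → ℝ) : cumul v 0 = 0 := intervalIntegral.integral_same

open Classical in
noncomputable def probeCnt (lo hi : ℝ) (K : ℕ) : (t : ℕ) → (Fin t → ℝ) → ℕ
  | 0, _ => 0
  | t + 1, a =>
      if probeCnt lo hi K t (fun i => a i.castSucc) < K
          ∧ lo ≤ a (Fin.last t) ∧ a (Fin.last t) < hi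
      then probeCnt lo hi K t (fun i => a i.castSucc) + 1
      else probeCnt lo hi K t (fun i => a i.castSucc)

lemma probeCnt_le (lo hi : ℝ) (K : ℕ) : ∀ (t : ℕ) (a : Fin t → ℝ),
    probeCnt lo hi K t a ≤ K
  | 0, _ => Nat.zero_le K
  | t + 1, a => by
      have ih := probeCnt_le lo hi K t (fun i => a i.castSucc)
      rw [probeCnt]
      split <;> omega

/-- The probe count along a trajectory `a : ℕ → ℝ` (cuts are `a 1, a 2, …`). -/
noncomputable def pc (lo hi : ℝ) (K : ℕ) (a : ℕ → ℝ) (t : ℕ) : ℕ :=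
  probeCnt lo hi K t (fun i => a (i.1+1))

lemma pc_zero (lo hi : ℝ) (K : ℕ) (a : ℕ → ℝ) : pc lo hi K a 0 = 0 := rfl

open Classical in
lemma pc_succ (lo hi : ℝ) (K : ℕ) (a : ℕ → ℝ) (t : ℕ) :
    pc lo hi K a (t+1) =
      if pc lo hi K a t < K ∧ lo ≤ a (t+1) ∧ a (t+1) < hi
      then pc lo hi K a t + 1 else pc lo hi K a t := rfl

lemma pc_le (lo hi : ℝ) (K : ℕ) (a : ℕ → ℝ) (t : ℕ) : pc lo hi K a t ≤ K :=
  probeCnt_le lo hi K t _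

lemma pc_succ_le (lo hi : ℝ) (K : ℕ) (a : ℕ → ℝ) (t : ℕ) :
    pc lo hi K a t ≤ pc lo hi K a (t+1) := by
  rw [pc_succ]; split <;> omega

lemma pc_mono (lo hi : ℝ) (K : ℕ) (a : ℕ → ℝ) {t t' : ℕ} (h : t ≤ t') :
    pc lo hi K a t ≤ pc lo hi K a t' :=
  (monotone_nat_of_le_succ (pc_succ_le lo hi K a)) h

end CakeAux

section CakeAux2

open Classical in
/-- Bob's budgeted-lying strategy with lie region `[lo, mid)` and budget `K` probes. -/
noncomputable def mySB (lo mid : ℝ) (K : ℕ) : BobStrategy := fun t cuts _ =>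
  if probeCnt lo mid K t (fun i => cuts i.castSucc) < K
      ∧ lo ≤ cuts (Fin.last t) ∧ cuts (Fin.last t) < mid
  then Choice.L
  else if mid ≤ cuts (Fin.last t) then Choice.L else Choice.R

open Classical in
lemma mySB_spec (lo mid : ℝ) (K : ℕ) (a : ℕ → ℝ) (b : ℕ → Choice) (T : ℕ)
    (h : BobConsistent (mySB lo mid K) a b T) :
    ∀ τ : ℕ, τ < T → b (τ+1) =
      if pc lo mid K a τ < K ∧ lo ≤ a (τ+1) ∧ a (τ+1) < mid
      then Choice.L else if mid ≤ a (τ+1) then Choice.L else Choice.R :=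
  fun τ hτ => h τ hτ

end CakeAux2
set_option maxHeartbeats 1000000 in
/-- For any `α ∈ [0,1)` and any Alice density `v_A`, there are a Bob density
`ṽ_B` (bounded above and below by positive constants) and Bob strategies `S̃_B` with regret
`O(T^α)`, against which every Alice strategy suffers Stackelberg regret `Ω(T^{(α+1)/2})`. -/
theorem bounded_regret_bob_alice_lower_bound
    (δ Δ : ℝ) (hδ : 0 < δ) (hδΔ : δ ≤ Δ)
    (α : ℝ) (hα0 : 0 ≤ α) (hα1 : α < 1)
    (vA : ℝ → ℝ) (hA : IsDensity δ Δ vA) :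
    ∃ (vB : ℝ → ℝ) (δ' Δ' : ℝ), 0 < δ' ∧ δ' ≤ Δ' ∧ IsDensity δ' Δ' vB ∧
    ∃ (c C : ℝ), 0 < c ∧ 0 < C ∧
    ∃ (T₀ : ℕ) (SB : ℕ → BobStrategy),
      ∀ T : ℕ, T₀ ≤ T →
        (∀ (a : ℕ → ℝ) (b : ℕ → Choice),
            (∀ t : ℕ, 1 ≤ t → t ≤ T → a t ∈ Set.Icc (0:ℝ) 1) →
            BobConsistent (SB T) a b T →
            bobRegret vB a b T ≤ C * (T : ℝ) ^ α) ∧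
        (∀ SA : AliceStrategy, ∀ (a : ℕ → ℝ) (b : ℕ → Choice),
            (∀ t : ℕ, 1 ≤ t → t ≤ T → a t ∈ Set.Icc (0:ℝ) 1) →
            AliceConsistent SA a b T → BobConsistent (SB T) a b T →
            ∀ mB : ℝ, mB ∈ Set.Icc (0:ℝ) 1 → cumul vB mB = 1/2 →
            c * (T : ℝ) ^ ((α + 1) / 2) ≤ aliceRegret vA mB a b T) := by
  classical
  have hΔ0 : 0 < Δ := lt_of_lt_of_le hδ hδΔ
  have hcA1 : cumul vA 1 = 1 := hA.2.2
  have hlip : LipschitzOnWith (Real.toNNReal Δ) (cumul vA) (Set.Icc 0 1) := by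
    apply LipschitzOnWith.of_dist_le_mul
    intro x hx y hy
    rw [Real.dist_eq, Real.dist_eq, Real.coe_toNNReal Δ hΔ0.le]
    rcases le_total x y with h | h
    · obtain ⟨h1, h2⟩ := cumul_bounds hA hx.1 hy.2 h
      have h0 : (0:ℝ) ≤ δ * (y - x) := mul_nonneg hδ.le (by linarith)
      have e1 : |cumul vA x - cumul vA y| = cumul vA y - cumul vA x := by
        rw [abs_sub_comm]; exact abs_of_nonneg (by linarith)
      have e2 : |x - y| = y - x := by
        rw [abs_sub_comm]; exact abs_of_nonneg (by linarith)
      rw [e1, e2]; linarith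
    · obtain ⟨h1, h2⟩ := cumul_bounds hA hy.1 hx.2 h
      have h0 : (0:ℝ) ≤ δ * (x - y) := mul_nonneg hδ.le (by linarith)
      have e1 : |cumul vA x - cumul vA y| = cumul vA x - cumul vA y :=
        abs_of_nonneg (by linarith)
      have e2 : |x - y| = x - y := abs_of_nonneg (by linarith)
      rw [e1, e2]; linarith
  have hmem : (1/2:ℝ) ∈ Set.Icc (cumul vA 0) (cumul vA 1) := by
    rw [cumul_zero, hcA1]; norm_num
  obtain ⟨m, hm01, hVAm⟩ :=
    intermediate_value_Icc (by norm_num : (0:ℝ) ≤ 1) hlip.continuousOn hmem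
  have hΔ1 : 1 ≤ Δ := by
    have h := (cumul_bounds hA le_rfl le_rfl (by norm_num : (0:ℝ) ≤ 1)).2
    rw [cumul_zero, hcA1] at h; linarith
  have h1m : 1 - 1/2 ≤ Δ * (1 - m) := by
    have h := (cumul_bounds hA hm01.1 le_rfl hm01.2).2
    rw [hcA1, hVAm] at h; linarith
  set g : ℝ := 1/(4*Δ) with hg_def
  have hg0 : 0 < g := by rw [hg_def]; positivity
  set mB : ℝ := m + g with hmB_def
  have h2g_eq : 2*g = 1/(2*Δ) := by rw [hg_def]; field_simp; ring
  have h1m' : 1/(2*Δ) ≤ 1 - m := by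
    rw [div_le_iff₀ (by positivity)]; linarith [h1m]
  have hmB_le1g : mB ≤ 1 - g := by rw [hmB_def]; linarith
  have hmB_lt1 : mB < 1 := by linarith
  have hmB1 : mB ≤ 1 := hmB_lt1.le
  have hmB_pos : 0 < mB := by rw [hmB_def]; linarith [hm01.1]
  have hg_mB : g ≤ mB := by rw [hmB_def]; linarith [hm01.1]
  have hg_1mB : g ≤ 1 - mB := by linarith
  clear_value g mB
  set vB : ℝ → ℝ := fun x => if x ≤ mB then 1/(2*mB) else 1/(2*(1-mB)) with hvB_def
  have hi1 : IntervalIntegrable vB volume 0 mB := by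
    rw [intervalIntegrable_iff, Set.uIoc_of_le hmB_pos.le]
    have hconst : IntegrableOn (fun _ : ℝ => 1/(2*mB)) (Set.Ioc 0 mB) volume :=
      integrableOn_const measure_Ioc_lt_top.ne
    exact hconst.congr_fun (fun x hx => by simp [hvB_def, hx.2]) measurableSet_Ioc
  have hi2 : IntervalIntegrable vB volume mB 1 := by
    rw [intervalIntegrable_iff, Set.uIoc_of_le hmB1]
    have hconst : IntegrableOn (fun _ : ℝ => 1/(2*(1-mB))) (Set.Ioc mB 1) volume :=
      integrableOn_const measure_Ioc_lt_top.ne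
    exact hconst.congr_fun (fun x hx => by simp [hvB_def, not_le.mpr hx.1]) measurableSet_Ioc
  have hIntB : IntervalIntegrable vB volume 0 1 := hi1.trans hi2
  have hIB1 : (∫ y in (0:ℝ)..mB, vB y) = 1/2 := by
    rw [intervalIntegral.integral_congr (g := fun _ => 1/(2*mB))
      (fun x hx => by
        rw [Set.uIcc_of_le hmB_pos.le] at hx
        simp [hvB_def, hx.2])]
    rw [intervalIntegral.integral_const, smul_eq_mul, sub_zero]
    field_simp
  have hIB2 : (∫ y in mB..(1:ℝ), vB y) = 1/2 := by
    rw [intervalIntegral.integral_congr_ae (g := fun _ => 1/(2*(1-mB)))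
      (Filter.Eventually.of_forall (fun x hx => by
        rw [Set.uIoc_of_le hmB1] at hx
        simp [hvB_def, not_le.mpr hx.1]))]
    rw [intervalIntegral.integral_const, smul_eq_mul]
    have h1mB : 1 - mB ≠ 0 := by linarith
    field_simp
  have htotB : (∫ y in (0:ℝ)..1, vB y) = 1 := by
    rw [← intervalIntegral.integral_add_adjacent_intervals hi1 hi2, hIB1, hIB2]
    norm_num
  have hVBmB : cumul vB mB = 1/2 := hIB1
  have h2g_inv : 1/(2*g) = 2*Δ := by rw [hg_def]; field_simp; ring
  have hBD : IsDensity (1/2) (2*Δ) vB := by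
    refine ⟨hIntB, ?_, htotB⟩
    intro x _hx
    rw [hvB_def]
    dsimp only
    split_ifs
    · constructor
      · exact one_div_le_one_div_of_le (by positivity) (by linarith)
      · calc 1/(2*mB) ≤ 1/(2*g) :=
              one_div_le_one_div_of_le (by positivity) (by linarith)
          _ = 2*Δ := h2g_inv
    · constructor
      · exact one_div_le_one_div_of_le (by linarith) (by linarith)
      · calc 1/(2*(1-mB)) ≤ 1/(2*g) :=
              one_div_le_one_div_of_le (by positivity) (by linarith)
          _ = 2*Δ := h2g_inv
  have hmB_uniq : ∀ x ∈ Set.Icc (0:ℝ) 1, cumul vB x = 1/2 → x = mB := by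
    intro x hx hVx
    by_contra hne
    rcases lt_or_gt_of_ne hne with h | h
    · have hh := (cumul_bounds hBD hx.1 hmB1 h.le).1
      rw [hVBmB, hVx] at hh; linarith
    · have hh := (cumul_bounds hBD hmB_pos.le hx.2 h.le).1
      rw [hVBmB, hVx] at hh; linarith
  have hVA_gap : ∀ x y, 0 ≤ x → x ≤ y → y ≤ 1 →
      δ*(y-x) ≤ cumul vA y - cumul vA x := fun x y hx h hy => (cumul_bounds hA hx hy h).1
  have hVA_lip : ∀ x y, 0 ≤ x → x ≤ y → y ≤ 1 →
      cumul vA y - cumul vA x ≤ Δ*(y-x) := fun x y hx h hy => (cumul_bounds hA hx hy h).2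
  have hVAmB : 1/2 + δ*g ≤ cumul vA mB := by
    have e : mB - m = g := by rw [hmB_def]; ring
    have h2 := hVA_gap m mB hm01.1 (by rw [hmB_def]; linarith) hmB1
    rw [hVAm, e] at h2
    linarith
  have hstack : stackValue vA mB = cumul vA mB :=
    max_eq_left (by linarith [mul_pos hδ hg0])
  refine ⟨vB, 1/2, 2*Δ, by norm_num, by linarith, hBD, δ^2*g/Δ, 8*(δ*g),
    div_pos (mul_pos (pow_pos hδ 2) hg0) hΔ0,
    mul_pos (by norm_num : (0:ℝ) < 8) (mul_pos hδ hg0), 1,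
    (fun T => mySB (mB - δ*g/Δ*(T:ℝ)^((α-1)/2)) mB ⌈(T:ℝ)^((α+1)/2)⌉₊), ?_⟩
  intro T hT
  set s : ℝ := δ*g/Δ*(T:ℝ)^((α-1)/2) with hs_def
  set K : ℕ := ⌈(T:ℝ)^((α+1)/2)⌉₊ with hK_def
  have hT1 : (1:ℝ) ≤ (T:ℝ) := by exact_mod_cast hT
  have hTpos : (0:ℝ) < (T:ℝ) := by linarith
  have hr1 : (T:ℝ)^((α-1)/2) ≤ 1 :=
    Real.rpow_le_one_of_one_le_of_nonpos hT1 (by linarith)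
  have hr0 : 0 < (T:ℝ)^((α-1)/2) := Real.rpow_pos_of_pos hTpos _
  have hs0 : 0 < s := by
    rw [hs_def]; exact mul_pos (div_pos (mul_pos hδ hg0) hΔ0) hr0
  have hsle : s ≤ δ*g/Δ := by
    rw [hs_def]
    exact mul_le_of_le_one_right (le_of_lt (div_pos (mul_pos hδ hg0) hΔ0)) hr1
  have heΔs : Δ*s = δ*g*(T:ℝ)^((α-1)/2) := by rw [hs_def]; field_simp
  have hΔs : Δ*s ≤ δ*g := by
    rw [heΔs]
    calc δ*g*(T:ℝ)^((α-1)/2) ≤ δ*g*1 :=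
          mul_le_mul_of_nonneg_left hr1 (le_of_lt (mul_pos hδ hg0))
      _ = δ*g := mul_one _
  have hs_g : s ≤ g := by
    have h' : g*δ ≤ g*Δ := mul_le_mul_of_nonneg_left hδΔ hg0.le
    have : δ*g/Δ ≤ g := by rw [div_le_iff₀ hΔ0]; linarith
    linarith
  have hmBs0 : 0 ≤ mB - s := by linarith
  have hK_geR : (T:ℝ)^((α+1)/2) ≤ (K:ℝ) := Nat.le_ceil _
  have hK_leR : (K:ℝ) ≤ (T:ℝ)^((α+1)/2) + 1 :=
    le_of_lt (Nat.ceil_lt_add_one (Real.rpow_nonneg hTpos.le _))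
  have hT_half1 : (1:ℝ) ≤ (T:ℝ)^((α+1)/2) := Real.one_le_rpow hT1 (by linarith)
  have hmulrT : (T:ℝ)^((α-1)/2) * (T:ℝ)^((α+1)/2) = (T:ℝ)^α := by
    rw [← Real.rpow_add hTpos]; congr 1; ring
  have hrT : (T:ℝ)^((α-1)/2) * (T:ℝ) = (T:ℝ)^((α+1)/2) := by
    have h := Real.rpow_add hTpos ((α-1)/2) 1
    rw [Real.rpow_one] at h
    rw [← h]; congr 1; ring
  have hTα1 : (1:ℝ) ≤ (T:ℝ)^α := Real.one_le_rpow hT1 hα0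
  have hVB_le : ∀ x, 0 ≤ x → x ≤ mB → cumul vB x ≤ 1/2 := by
    intro x hx0 hx
    have h := (cumul_bounds hBD hx0 hmB1 hx).1
    rw [hVBmB] at h; linarith
  have hVB_ge : ∀ x, mB ≤ x → x ≤ 1 → 1/2 ≤ cumul vB x := by
    intro x hx hx1
    have h := (cumul_bounds hBD hmB_pos.le hx1 hx).1
    rw [hVBmB] at h; linarith
  clear_value s K
  constructor
  · intro a b ha hBob
    have hBob' : BobConsistent (mySB (mB - s) mB K) a b T := by
      rw [hs_def, hK_def]; exact hBob
    have hb := mySB_spec (mB - s) mB K a b T hBob'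
    have key : ∀ τ, τ < T →
        max (cumul vB (a (τ+1))) (1 - cumul vB (a (τ+1))) - uB vB a b (τ+1) ≤
          (((pc (mB-s) mB K a (τ+1) : ℕ):ℝ) - ((pc (mB-s) mB K a τ : ℕ):ℝ)) * (4*(Δ*s)) := by
      intro τ hτ
      obtain ⟨hx0, hx1⟩ := ha (τ+1) (by omega) (by omega)
      by_cases hc : pc (mB-s) mB K a τ < K ∧ mB - s ≤ a (τ+1) ∧ a (τ+1) < mB
      · have hbt : b (τ+1) = Choice.L := by rw [hb τ hτ, if_pos hc]
        have hpc : ((pc (mB-s) mB K a (τ+1) :ℕ):ℝ) - ((pc (mB-s) mB K a τ :ℕ):ℝ) = 1 := by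
          rw [pc_succ, if_pos hc]; push_cast; ring
        rw [hpc, one_mul]
        have huB : uB vB a b (τ+1) = cumul vB (a (τ+1)) := by simp [uB, hbt]
        have hle := hVB_le (a (τ+1)) hx0 hc.2.2.le
        have hub := (cumul_bounds hBD hx0 hmB1 hc.2.2.le).2
        rw [hVBmB] at hub
        have hsx : mB - a (τ+1) ≤ s := by linarith [hc.2.1]
        have h2 : Δ*(mB - a (τ+1)) ≤ Δ*s := mul_le_mul_of_nonneg_left hsx hΔ0.le
        rw [huB, max_eq_right (by linarith)]
        linarith
      · have hpc : ((pc (mB-s) mB K a (τ+1) :ℕ):ℝ) - ((pc (mB-s) mB K a τ :ℕ):ℝ) = 0 := by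
          rw [pc_succ, if_neg hc]; ring
        rw [hpc, zero_mul]
        by_cases hx : mB ≤ a (τ+1)
        · have hbt : b (τ+1) = Choice.L := by rw [hb τ hτ, if_neg hc, if_pos hx]
          have huB : uB vB a b (τ+1) = cumul vB (a (τ+1)) := by simp [uB, hbt]
          have hge := hVB_ge (a (τ+1)) hx hx1
          rw [huB, max_eq_left (by linarith)]
          linarith
        · have hbt : b (τ+1) = Choice.R := by rw [hb τ hτ, if_neg hc, if_neg hx]
          have huB : uB vB a b (τ+1) = 1 - cumul vB (a (τ+1)) := by simp [uB, hbt]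
          have hle := hVB_le (a (τ+1)) hx0 (le_of_not_ge hx)
          rw [huB, max_eq_right (by linarith)]
          linarith
    calc bobRegret vB a b T
        = ∑ i ∈ Finset.range T,
            (max (cumul vB (a (i+1))) (1 - cumul vB (a (i+1))) - uB vB a b (i+1)) :=
          sum_Icc_one_eq_range _ T
      _ ≤ ∑ i ∈ Finset.range T,
            ((((pc (mB-s) mB K a (i+1) :ℕ):ℝ) - ((pc (mB-s) mB K a i :ℕ):ℝ)) * (4*(Δ*s))) :=
          Finset.sum_le_sum (fun i hi => key i (Finset.mem_range.1 hi))
      _ = (((pc (mB-s) mB K a T :ℕ):ℝ) - ((pc (mB-s) mB K a 0 :ℕ):ℝ)) * (4*(Δ*s)) := by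
          rw [← Finset.sum_mul, Finset.sum_range_sub (fun i => ((pc (mB-s) mB K a i :ℕ):ℝ))]
      _ ≤ (K:ℝ) * (4*(Δ*s)) := by
          have h1 : ((pc (mB-s) mB K a T :ℕ):ℝ) ≤ (K:ℝ) := by
            exact_mod_cast pc_le (mB-s) mB K a T
          have h2 : pc (mB-s) mB K a 0 = 0 := pc_zero _ _ _ _
          have h3 : (0:ℝ) ≤ 4*(Δ*s) := mul_nonneg (by norm_num) (mul_nonneg hΔ0.le hs0.le)
          rw [h2]
          push_cast
          linarith [mul_nonneg (sub_nonneg.2 h1) h3]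
      _ ≤ 8*(δ*g)*(T:ℝ)^α := by
          have h4 : (0:ℝ) ≤ 4*(Δ*s) := mul_nonneg (by norm_num) (mul_nonneg hΔ0.le hs0.le)
          have e1 : (4:ℝ)*(Δ*s) = 4*(δ*g)*((T:ℝ)^((α-1)/2)) := by rw [heΔs]; ring
          have hδg : (0:ℝ) < δ*g := mul_pos hδ hg0
          calc (K:ℝ) * (4*(Δ*s)) ≤ ((T:ℝ)^((α+1)/2)+1)*(4*(Δ*s)) :=
                mul_le_mul_of_nonneg_right hK_leR h4
            _ = 4*(δ*g)*((T:ℝ)^((α-1)/2) * (T:ℝ)^((α+1)/2)) + 4*(δ*g)*(T:ℝ)^((α-1)/2) := by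
                rw [e1]; ring
            _ = 4*(δ*g)*(T:ℝ)^α + 4*(δ*g)*(T:ℝ)^((α-1)/2) := by rw [hmulrT]
            _ ≤ 4*(δ*g)*(T:ℝ)^α + 4*(δ*g)*(T:ℝ)^α := by
                linarith [mul_nonneg hδg.le
                  (show (0:ℝ) ≤ (T:ℝ)^α - (T:ℝ)^((α-1)/2) by linarith)]
            _ = 8*(δ*g)*(T:ℝ)^α := by ring
  · intro SA a b ha _hAC hBob mB' hmB'mem hmB'half
    have hmBeq : mB' = mB := hmB_uniq mB' hmB'mem hmB'half
    rw [hmBeq]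
    have hBob' : BobConsistent (mySB (mB - s) mB K) a b T := by
      rw [hs_def, hK_def]; exact hBob
    have hb := mySB_spec (mB - s) mB K a b T hBob'
    have hδg : (0:ℝ) < δ*g := mul_pos hδ hg0
    have hδsg : δ*s ≤ δ*g := mul_le_mul_of_nonneg_left hs_g hδ.le
    have keyA : ∀ τ, τ < T →
        (δ*g*(((pc (mB-s) mB K a (τ+1) :ℕ):ℝ) - ((pc (mB-s) mB K a τ :ℕ):ℝ))
            ≤ stackValue vA mB - uA vA a b (τ+1))
        ∧ (pc (mB-s) mB K a τ < K → δ*s ≤ stackValue vA mB - uA vA a b (τ+1)) := by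
      intro τ hτ
      obtain ⟨hx0, hx1⟩ := ha (τ+1) (by omega) (by omega)
      rw [hstack]
      by_cases hc : pc (mB-s) mB K a τ < K ∧ mB - s ≤ a (τ+1) ∧ a (τ+1) < mB
      · have hbt : b (τ+1) = Choice.L := by rw [hb τ hτ, if_pos hc]
        have hpc : ((pc (mB-s) mB K a (τ+1) :ℕ):ℝ) - ((pc (mB-s) mB K a τ :ℕ):ℝ) = 1 := by
          rw [pc_succ, if_pos hc]; push_cast; ring
        have huA : uA vA a b (τ+1) = 1 - cumul vA (a (τ+1)) := by simp [uA, hbt]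
        have hlipx := hVA_lip (a (τ+1)) mB hx0 hc.2.2.le hmB1
        have hsx : mB - a (τ+1) ≤ s := by linarith [hc.2.1]
        have hΔx : Δ*(mB - a (τ+1)) ≤ Δ*s := mul_le_mul_of_nonneg_left hsx hΔ0.le
        have hterm : δ*g ≤ cumul vA mB - uA vA a b (τ+1) := by
          rw [huA]; linarith [hVAmB, hΔs]
        exact ⟨by rw [hpc, mul_one]; exact hterm, fun _ => le_trans hδsg hterm⟩
      · have hpc : ((pc (mB-s) mB K a (τ+1) :ℕ):ℝ) - ((pc (mB-s) mB K a τ :ℕ):ℝ) = 0 := by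
          rw [pc_succ, if_neg hc]; ring
        by_cases hx : mB ≤ a (τ+1)
        · have hbt : b (τ+1) = Choice.L := by rw [hb τ hτ, if_neg hc, if_pos hx]
          have huA : uA vA a b (τ+1) = 1 - cumul vA (a (τ+1)) := by simp [uA, hbt]
          have hmono := hVA_gap mB (a (τ+1)) hmB_pos.le hx hx1
          have h0 : (0:ℝ) ≤ δ*(a (τ+1) - mB) := mul_nonneg hδ.le (by linarith)
          have hterm : δ*g ≤ cumul vA mB - uA vA a b (τ+1) := by
            rw [huA]; linarith [hVAmB]
          exact ⟨by rw [hpc, mul_zero]; linarith, fun _ => le_trans hδsg hterm⟩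
        · have hbt : b (τ+1) = Choice.R := by rw [hb τ hτ, if_neg hc, if_neg hx]
          have huA : uA vA a b (τ+1) = cumul vA (a (τ+1)) := by simp [uA, hbt]
          have hxle : a (τ+1) ≤ mB := (not_le.1 hx).le
          have hgap := hVA_gap (a (τ+1)) mB hx0 hxle hmB1
          have h0 : (0:ℝ) ≤ δ*(mB - a (τ+1)) := mul_nonneg hδ.le (by linarith)
          constructor
          · rw [hpc, mul_zero, huA]; linarith
          · intro hK'
            have hxlt : a (τ+1) < mB - s := by
              by_contra hge
              exact hc ⟨hK', not_lt.1 hge, not_le.1 hx⟩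
            have hδx : δ*s ≤ δ*(mB - a (τ+1)) :=
              mul_le_mul_of_nonneg_left (by linarith) hδ.le
            rw [huA]; linarith
    have hAR : aliceRegret vA mB a b T
        = ∑ i ∈ Finset.range T, (stackValue vA mB - uA vA a b (i+1)) :=
      sum_Icc_one_eq_range _ T
    rcases lt_or_eq_of_le (pc_le (mB-s) mB K a T) with hKlt | hKeq
    · have e : (T:ℝ)*(δ*s) = δ^2*g/Δ*(T:ℝ)^((α+1)/2) := by
        rw [hs_def, ← hrT]; field_simp
      calc δ^2*g/Δ*(T:ℝ)^((α+1)/2) = (T:ℝ)*(δ*s) := e.symm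
        _ = ∑ _i ∈ Finset.range T, δ*s := by
            rw [Finset.sum_const, Finset.card_range, nsmul_eq_mul]
        _ ≤ ∑ i ∈ Finset.range T, (stackValue vA mB - uA vA a b (i+1)) :=
            Finset.sum_le_sum (fun i hi =>
              (keyA i (Finset.mem_range.1 hi)).2
                (lt_of_le_of_lt
                  (pc_mono (mB-s) mB K a (Nat.le_of_lt (Finset.mem_range.1 hi))) hKlt))
        _ = aliceRegret vA mB a b T := hAR.symm
    · have hcle : δ^2*g/Δ ≤ δ*g := by
        rw [div_le_iff₀ hΔ0]; linarith [mul_le_mul_of_nonneg_left hδΔ hδg.le]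
      have hTp : (0:ℝ) ≤ (T:ℝ)^((α+1)/2) := by linarith
      calc δ^2*g/Δ*(T:ℝ)^((α+1)/2) ≤ δ*g*(T:ℝ)^((α+1)/2) :=
            mul_le_mul_of_nonneg_right hcle hTp
        _ ≤ δ*g*(K:ℝ) := mul_le_mul_of_nonneg_left hK_geR hδg.le
        _ = δ*g*(((pc (mB-s) mB K a T :ℕ):ℝ) - ((pc (mB-s) mB K a 0 :ℕ):ℝ)) := by
            rw [pc_zero, hKeq]; push_cast; ring
        _ = ∑ i ∈ Finset.range T,
              (δ*g*(((pc (mB-s) mB K a (i+1):ℕ):ℝ) - ((pc (mB-s) mB K a i :ℕ):ℝ))) := by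
            rw [← Finset.mul_sum, Finset.sum_range_sub (fun i => ((pc (mB-s) mB K a i :ℕ):ℝ))]
        _ ≤ ∑ i ∈ Finset.range T, (stackValue vA mB - uA vA a b (i+1)) :=
            Finset.sum_le_sum (fun i hi => (keyA i (Finset.mem_range.1 hi)).1)
        _ = aliceRegret vA mB a b T := hAR.symm
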